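/- Let X be a square-integrable random variable with E[X] = m and Var(X) ≤ v². Then for every α ∈ [0,1), EVaR_α^2(X) := inf_{t ∈ ℝ}{ t + (1-α)^{-1/2} (E[((X-t)⁺)²])^{1/2} } ≤ m + v·α^{1/2}(1-α)^{-1/2}. -/

import Mathlib

open MeasureTheory

theorem stmt_11 {Ω : Type*} [MeasurableSpace Ω] (μ : Measure Ω) [IsProbabilityMeasure μ]
    (X : Ω → ℝ) (hX : MemLp X 2 μ) (m v α : ℝ) (hv : 0 ≤ v)
    (hm : ∫ ω, X ω ∂μ = m) (hvar : ∫ ω, (X ω - m) ^ 2 ∂μ ≤ v ^ 2)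
    (hα : α ∈ Set.Ico (0:ℝ) 1) :
    (⨅ t : ℝ, (t + (1 - α) ^ (-(1/2 : ℝ)) *
        (∫ ω, (max (X ω - t) 0) ^ 2 ∂μ) ^ ((1/2 : ℝ)))) ≤
      m + v * α ^ ((1/2 : ℝ)) * (1 - α) ^ (-(1/2 : ℝ)) := by
  obtain ⟨hα0, hα1⟩ := hα
  have h1α : (0:ℝ) < 1 - α := by linarith
  have hs1α : (0:ℝ) < Real.sqrt (1 - α) := Real.sqrt_pos.2 h1α
  have hcdef : (1 - α) ^ (-(1/2 : ℝ)) = (Real.sqrt (1 - α))⁻¹ := by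
    rw [Real.rpow_neg h1α.le, Real.sqrt_eq_rpow]
  have hXI : Integrable X μ := hX.integrable one_le_two
  have hmax : ∀ t : ℝ, MemLp (fun ω => max (X ω - t) 0) 2 μ :=
    fun t => (hX.sub (memLp_const t)).pos_part
  have hmaxsqI : ∀ t : ℝ, Integrable (fun ω => max (X ω - t) 0 ^ 2) μ :=
    fun t => (hmax t).integrable_sq
  have hInn : ∀ t : ℝ, 0 ≤ ∫ ω, max (X ω - t) 0 ^ 2 ∂μ :=
    fun t => integral_nonneg fun ω => sq_nonneg _
  have hXmI : Integrable (fun ω => X ω - m) μ := hXI.sub (integrable_const m)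
  have hXmsq : Integrable (fun ω => (X ω - m) ^ 2) μ := (hX.sub (memLp_const m)).integrable_sq
  have hEXm : ∫ ω, (X ω - m) ∂μ = 0 := by
    rw [integral_sub hXI (integrable_const m), hm, integral_const]; simp
  -- upper bound on the second moment of the positive part
  have hIub : ∀ t : ℝ, ∫ ω, max (X ω - t) 0 ^ 2 ∂μ ≤ v ^ 2 + (m - t) ^ 2 := by
    intro t
    have hXtsq : Integrable (fun ω => (X ω - t) ^ 2) μ := (hX.sub (memLp_const t)).integrable_sq
    have h1 : ∫ ω, max (X ω - t) 0 ^ 2 ∂μ ≤ ∫ ω, (X ω - t) ^ 2 ∂μ := by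
      refine integral_mono (hmaxsqI t) hXtsq fun ω => ?_
      rcases le_total (X ω - t) 0 with h | h
      · rw [max_eq_right h]; simpa using sq_nonneg (X ω - t)
      · rw [max_eq_left h]
    have h2 : ∫ ω, (X ω - t) ^ 2 ∂μ = (∫ ω, (X ω - m) ^ 2 ∂μ) + (m - t) ^ 2 := by
      have hfun : (fun ω => (X ω - t) ^ 2)
          = fun ω => ((X ω - m) ^ 2 + (2 * (m - t)) * (X ω - m)) + (m - t) ^ 2 := by
        funext ω; ring
      rw [hfun]
      have e1 : ∫ ω, (((X ω - m) ^ 2 + (2 * (m - t)) * (X ω - m)) + (m - t) ^ 2) ∂μ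
          = (∫ ω, ((X ω - m) ^ 2 + (2 * (m - t)) * (X ω - m)) ∂μ) + ∫ _ω, (m - t) ^ 2 ∂μ :=
        integral_add (hXmsq.add (hXmI.const_mul _)) (integrable_const _)
      have e2 : ∫ ω, ((X ω - m) ^ 2 + (2 * (m - t)) * (X ω - m)) ∂μ
          = (∫ ω, (X ω - m) ^ 2 ∂μ) + ∫ ω, (2 * (m - t)) * (X ω - m) ∂μ :=
        integral_add hXmsq (hXmI.const_mul _)
      have e3 : ∫ ω, (2 * (m - t)) * (X ω - m) ∂μ = (2 * (m - t)) * ∫ ω, (X ω - m) ∂μ :=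
        integral_const_mul _ _
      rw [e1, e2, e3, hEXm, integral_const]
      simp
    have : (∫ ω, (X ω - m) ^ 2 ∂μ) + (m - t) ^ 2 ≤ v ^ 2 + (m - t) ^ 2 := by linarith
    linarith
  -- the function is bounded below by m
  have hc1 : 1 ≤ (1 - α) ^ (-(1/2 : ℝ)) := by
    rw [hcdef]
    exact (one_le_inv₀ hs1α).2 (Real.sqrt_le_one.2 (by linarith))
  have hbdd : BddBelow (Set.range fun t : ℝ => t + (1 - α) ^ (-(1/2 : ℝ)) *
      (∫ ω, (max (X ω - t) 0) ^ 2 ∂μ) ^ ((1/2 : ℝ))) := by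
    refine ⟨m, ?_⟩
    rintro x ⟨t, rfl⟩
    have hS0 : (0:ℝ) ≤ (∫ ω, (max (X ω - t) 0) ^ 2 ∂μ) ^ ((1/2 : ℝ)) :=
      Real.rpow_nonneg (hInn t) _
    rcases le_total t m with h | h
    · have hd : (0:ℝ) ≤ m - t := by linarith
      have hmaxI : Integrable (fun ω => max (X ω - t) 0) μ := (hmax t).integrable one_le_two
      have hXtI : Integrable (fun ω => X ω - t) μ := hXI.sub (integrable_const t)
      have hEXt : ∫ ω, (X ω - t) ∂μ = m - t := by
        rw [integral_sub hXI (integrable_const t), hm, integral_const]; simp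
      have hEmax : m - t ≤ ∫ ω, max (X ω - t) 0 ∂μ := by
        have h' : ∫ ω, (X ω - t) ∂μ ≤ ∫ ω, max (X ω - t) 0 ∂μ :=
          integral_mono hXtI hmaxI (fun ω => le_max_left (X ω - t) 0)
        linarith [hEXt ▸ h']
      have hSq : (m - t) ^ 2 ≤ ∫ ω, max (X ω - t) 0 ^ 2 ∂μ := by
        have hpt : ∀ ω, 2 * (m - t) * max (X ω - t) 0 - (m - t) ^ 2 ≤ max (X ω - t) 0 ^ 2 :=
          fun ω => by nlinarith [sq_nonneg (max (X ω - t) 0 - (m - t))]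
        have h' : ∫ ω, (2 * (m - t) * max (X ω - t) 0 - (m - t) ^ 2) ∂μ
            ≤ ∫ ω, max (X ω - t) 0 ^ 2 ∂μ :=
          integral_mono ((hmaxI.const_mul (2 * (m - t))).sub (integrable_const
            ((m - t) ^ 2))) (hmaxsqI t) hpt
        have e1 : ∫ ω, (2 * (m - t) * max (X ω - t) 0 - (m - t) ^ 2) ∂μ
            = (∫ ω, 2 * (m - t) * max (X ω - t) 0 ∂μ) - ∫ _ω, (m - t) ^ 2 ∂μ :=
          integral_sub (hmaxI.const_mul _) (integrable_const _)
        have e2 : ∫ ω, 2 * (m - t) * max (X ω - t) 0 ∂μ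
            = 2 * (m - t) * ∫ ω, max (X ω - t) 0 ∂μ := integral_const_mul _ _
        rw [e1, e2, integral_const] at h'
        simp only [probReal_univ, ENNReal.toReal_one, smul_eq_mul, one_mul] at h'
        nlinarith
      have hSlb : m - t ≤ (∫ ω, (max (X ω - t) 0) ^ 2 ∂μ) ^ ((1/2 : ℝ)) := by
        rw [← Real.sqrt_eq_rpow]
        calc m - t = Real.sqrt ((m - t) ^ 2) := (Real.sqrt_sq hd).symm
          _ ≤ _ := Real.sqrt_le_sqrt hSq
      nlinarith
    · nlinarith
  -- conversion of the minimand's second factor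
  have hSub : ∀ t : ℝ, (∫ ω, (max (X ω - t) 0) ^ 2 ∂μ) ^ ((1/2 : ℝ))
      ≤ Real.sqrt (v ^ 2 + (m - t) ^ 2) := by
    intro t
    rw [← Real.sqrt_eq_rpow]
    exact Real.sqrt_le_sqrt (hIub t)
  rcases eq_or_lt_of_le hα0 with h0 | h0
  · -- α = 0
    have hα' : α = 0 := h0.symm
    subst hα'
    simp only [sub_zero, Real.one_rpow, Real.zero_rpow (by norm_num : (1/2 : ℝ) ≠ 0),
      mul_zero, zero_mul, add_zero] at hbdd hSub ⊢
    refine le_of_forall_pos_le_add fun ε hε => ?_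
    set d : ℝ := max (v ^ 2 / (2 * ε)) 0 with hddef
    have hd0 : 0 ≤ d := le_max_right _ _
    have hd1 : v ^ 2 / (2 * ε) ≤ d := le_max_left _ _
    have hd2 : v ^ 2 ≤ 2 * ε * d := by
      rw [div_le_iff₀ (by linarith)] at hd1; linarith
    refine le_trans (ciInf_le hbdd (m - d)) ?_
    have h1 : (∫ ω, (max (X ω - (m - d)) 0) ^ 2 ∂μ) ^ ((1/2 : ℝ))
        ≤ Real.sqrt (v ^ 2 + d ^ 2) := by
      have := hSub (m - d)
      simpa using this
    have h2 : Real.sqrt (v ^ 2 + d ^ 2) ≤ d + ε := by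
      calc Real.sqrt (v ^ 2 + d ^ 2) ≤ Real.sqrt ((d + ε) ^ 2) :=
            Real.sqrt_le_sqrt (by nlinarith)
        _ = d + ε := Real.sqrt_sq (by linarith)
    simp only [one_mul]
    linarith
  · -- 0 < α
    have hsα : (0:ℝ) < Real.sqrt α := Real.sqrt_pos.2 h0
    have hsα2 : Real.sqrt α * Real.sqrt α = α := Real.mul_self_sqrt hα0
    have hs1α2 : Real.sqrt (1 - α) * Real.sqrt (1 - α) = 1 - α := Real.mul_self_sqrt h1α.le
    set d : ℝ := v * (Real.sqrt (1 - α) / Real.sqrt α) with hddef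
    have hd0 : 0 ≤ d := by positivity
    refine le_trans (ciInf_le hbdd (m - d)) ?_
    have h1 : (∫ ω, (max (X ω - (m - d)) 0) ^ 2 ∂μ) ^ ((1/2 : ℝ))
        ≤ Real.sqrt (v ^ 2 + d ^ 2) := by
      have := hSub (m - d)
      simpa using this
    have h2 : Real.sqrt (v ^ 2 + d ^ 2) = v / Real.sqrt α := by
      have hval : v ^ 2 + d ^ 2 = (v / Real.sqrt α) ^ 2 := by
        rw [hddef]
        field_simp
        linear_combination (v^2) * hs1α2 + (v^2) * hsα2
      rw [hval, Real.sqrt_sq (by positivity)]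
    have hclb : (0:ℝ) < (Real.sqrt (1 - α))⁻¹ := by positivity
    have hstep : (Real.sqrt (1 - α))⁻¹ * ((∫ ω, (max (X ω - (m - d)) 0) ^ 2 ∂μ) ^ ((1/2 : ℝ)))
        ≤ (Real.sqrt (1 - α))⁻¹ * (v / Real.sqrt α) := by
      rw [← h2]
      exact mul_le_mul_of_nonneg_left h1 hclb.le
    have hfinal : m - d + (Real.sqrt (1 - α))⁻¹ * (v / Real.sqrt α)
        = m + v * Real.sqrt α * (Real.sqrt (1 - α))⁻¹ := by
      rw [hddef]
      field_simp
      linear_combination (-v) * hsα2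
        - v * hs1α2
    rw [hcdef, show α ^ ((1/2 : ℝ)) = Real.sqrt α from (Real.sqrt_eq_rpow α).symm]
    linarith [hstep, hfinal.le]
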